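/- Let f : X → Y be a perfect surjective map between metrizable spaces, K a closed convex subset of a Banach space E, and for every y ∈ Y let 𝒞(y) ⊆ C*(X, K) be a set such that whenever h ∈ C*(X, K) restricts on f⁻¹(y) to the same map as some g ∈ 𝒞(y), then h ∈ 𝒞(y); let ψ(y) = C*(X, K) ∖ 𝒞(y). Fix y ∈ Y and suppose that for every k ∈ ℕ (respectively, for k = m) the set of all maps h ∈ C(𝕀^k × f⁻¹(y), K) with h|({z} × f⁻¹(y)) ∈ 𝒞(y) for each z ∈ 𝕀^k is dense in C(𝕀^k × f⁻¹(y), K) with respect to the uniform convergence topology. If ψ(y) is closed in C*(X, K), then for every continuous function α : X → (0,∞) and every g ∈ C*(X, K), the set ψ(y) ∩ B̄(g, α) is a Z-set (respectively, a Z_m-set) in B̄(g, α), where B̄(g, α) = {h ∈ C*(X, K) : d(g(x), h(x)) ≤ α(x) for all x ∈ X} is considered as a subspace of C*(X, K) equipped with the uniform convergence topology. -/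

import Mathlib

open Set Topology Metric BoundedContinuousFunction

noncomputable section

/-- Covering dimension at most `n` (for a natural number `n`): every finite open cover
has an open refinement covering the space such that every point belongs to at most
`n + 1` members of the refinement. -/
def CovDimLENat (X : Type*) [TopologicalSpace X] (n : ℕ) : Prop :=
  ∀ 𝒰 : Set (Set X), 𝒰.Finite → (∀ U ∈ 𝒰, IsOpen U) → ⋃₀ 𝒰 = Set.univ →
    ∃ 𝒱 : Set (Set X), (∀ V ∈ 𝒱, IsOpen V) ∧ ⋃₀ 𝒱 = Set.univ ∧
      (∀ V ∈ 𝒱, ∃ U ∈ 𝒰, V ⊆ U) ∧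
      ∀ x : X, {V ∈ 𝒱 | x ∈ V}.Finite ∧ {V ∈ 𝒱 | x ∈ V}.ncard ≤ n + 1

/-- Covering dimension at most `n` for an integer `n`; negative bounds mean the space
is empty (`dim ∅ = -1`). -/
def CovDimLE (X : Type*) [TopologicalSpace X] (n : ℤ) : Prop :=
  IsEmpty X ∨ ∃ k : ℕ, (k : ℤ) ≤ n ∧ CovDimLENat X k

/-- A space is finite-dimensional if its covering dimension is at most `n` for some `n`. -/
def FiniteDimSpace (X : Type*) [TopologicalSpace X] : Prop :=
  ∃ n : ℕ, CovDimLENat X n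

/-- A perfect map: continuous, closed, with compact fibers. -/
def IsPerfectMap {X Y : Type*} [TopologicalSpace X] [TopologicalSpace Y] (f : X → Y) : Prop :=
  Continuous f ∧ IsClosedMap f ∧ ∀ y : Y, IsCompact (f ⁻¹' {y})

/-- A σ-perfect map: `X` is a countable union of closed sets `A i` whose images are
closed and on which `f` restricts to a perfect map onto its image. -/
def IsSigmaPerfectMap {X Y : Type*} [TopologicalSpace X] [TopologicalSpace Y] (f : X → Y) :
    Prop :=
  Continuous f ∧ ∃ A : ℕ → Set X, (⋃ i, A i) = Set.univ ∧
    ∀ i, IsClosed (A i) ∧ IsClosed (f '' A i) ∧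
      IsPerfectMap (Set.MapsTo.restrict f (A i) (f '' A i) (Set.mapsTo_image f (A i)))

/-- `dim f ≤ k`: every fiber of `f` has covering dimension at most `k`. -/
def DimMapLE {X Y : Type*} [TopologicalSpace X] [TopologicalSpace Y] (f : X → Y) (k : ℤ) :
    Prop :=
  ∀ y : Y, CovDimLE (f ⁻¹' {y}) k

/-- `B_n(h)`: the set of points of the codomain having at least `n` preimages. -/
def BranchSet {X Z : Type*} (h : X → Z) (n : ℕ) : Set Z :=
  {z | ∃ S : Finset X, n ≤ S.card ∧ ∀ x ∈ S, h x = z}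

/-- The source limitation topology on the space of bounded continuous maps. -/
def sourceLimitation (X E : Type*) [TopologicalSpace X] [PseudoMetricSpace E] :
    TopologicalSpace (X →ᵇ E) where
  IsOpen U := ∀ g ∈ U, ∃ α : X → ℝ, Continuous α ∧ (∀ x, 0 < α x) ∧
    ∀ h : X →ᵇ E, (∀ x, dist (h x) (g x) ≤ α x) → h ∈ U
  isOpen_univ := fun g _ =>
    ⟨fun _ => 1, continuous_const, fun _ => one_pos, fun _ _ => trivial⟩
  isOpen_inter := by
    rintro U V hU hV g ⟨hgU, hgV⟩
    obtain ⟨α, hαc, hαp, hα⟩ := hU g hgU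
    obtain ⟨β, hβc, hβp, hβ⟩ := hV g hgV
    exact ⟨fun x => min (α x) (β x), hαc.min hβc, fun x => lt_min (hαp x) (hβp x),
      fun h hh => ⟨hα h fun x => (hh x).trans (min_le_left _ _),
        hβ h fun x => (hh x).trans (min_le_right _ _)⟩⟩
  isOpen_sUnion := by
    rintro S hS g ⟨U, hU, hgU⟩
    obtain ⟨α, hc, hp, h⟩ := hS U hU g hgU
    exact ⟨α, hc, hp, fun h' hh' => ⟨U, hU, h h' hh'⟩⟩

/-- A C-space. -/
def IsCSpace (Y : Type*) [TopologicalSpace Y] : Prop :=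
  ∀ 𝒰 : ℕ → Set (Set Y), (∀ n, (∀ U ∈ 𝒰 n, IsOpen U) ∧ ⋃₀ 𝒰 n = Set.univ) →
    ∃ 𝒱 : ℕ → Set (Set Y),
      (∀ n, (∀ V ∈ 𝒱 n, IsOpen V) ∧ (∀ V ∈ 𝒱 n, ∃ U ∈ 𝒰 n, V ⊆ U) ∧
        (𝒱 n).Pairwise (Disjoint · ·)) ∧
      ⋃₀ (⋃ n, 𝒱 n) = Set.univ

/-- `F` is a `Z_m`-set in `M`: `F` is closed and the maps from the `m`-cube avoiding `F`
are dense in `C(𝕀^m, M)` (uniform convergence topology). -/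
def IsZmSet (m : ℕ) {M : Type*} [TopologicalSpace M] (F : Set M) : Prop :=
  IsClosed F ∧ Dense {u : C((Fin m → unitInterval), M) | ∀ z, u z ∉ F}

/-- `F` is a `Z`-set in `M` if it is a `Z_m`-set for all `m`. -/
def IsZSet {M : Type*} [TopologicalSpace M] (F : Set M) : Prop :=
  ∀ m : ℕ, IsZmSet m F

end

section Dugundji
open Function

variable {X : Type*} [MetricSpace X] {E : Type*} [NormedAddCommGroup E] [NormedSpace ℝ E]

theorem dugundji_extension {F : Set X} (hF : IsCompact F) (hne : F.Nonempty) :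
    ∃ R : C(↥F, E) → X → E,
      (∀ c, Continuous (R c)) ∧
      (∀ c x (hx : x ∈ F), R c x = c ⟨x, hx⟩) ∧
      (∀ (c : C(↥F, E)) (T : Set E), Convex ℝ T → (∀ b, c b ∈ T) → ∀ x, R c x ∈ T) ∧
      (∀ (c c' : C(↥F, E)) (r : ℝ), 0 ≤ r → (∀ b, dist (c b) (c' b) ≤ r) →
        ∀ x, dist (R c x) (R c' x) ≤ r) := by
  classical
  have hFcl : IsClosed F := hF.isClosed
  set Ω : Set X := Fᶜ with hΩ
  -- the cover of Ω by balls
  have hdpos : ∀ q : ↥Ω, 0 < infDist (q : X) F := by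
    rintro ⟨q, hq⟩
    rcases (infDist_nonneg (x := q) (s := F)).lt_or_eq with h | h
    · exact h
    · exfalso
      apply hq
      have : (q : X) ∈ closure F := (mem_closure_iff_infDist_zero hne).2 h.symm
      rwa [hFcl.closure_eq] at this
  set V : ↥Ω → Set ↥Ω := fun q => {p : ↥Ω | dist (p : X) (q : X) < infDist (q : X) F / 2}
    with hV
  have hVopen : ∀ q, IsOpen (V q) := by
    intro q
    exact isOpen_lt (by fun_prop) continuous_const
  have hVcover : (univ : Set ↥Ω) ⊆ ⋃ q, V q := by
    intro p _
    exact mem_iUnion.2 ⟨p, by simpa [hV] using half_pos (hdpos p)⟩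
  obtain ⟨f, hfsub⟩ := PartitionOfUnity.exists_isSubordinate isClosed_univ V hVopen hVcover
  -- nearest points
  have ha : ∀ q : ↥Ω, ∃ b ∈ F, infDist (q : X) F = dist (q : X) b :=
    fun q => hF.exists_infDist_eq_dist hne q
  choose a haF had using ha
  set aF : ↥Ω → ↥F := fun q => ⟨a q, haF q⟩ with haF
  -- key geometric fact
  have hgeo : ∀ (q : ↥Ω) (p : ↥Ω), f q p ≠ 0 →
      dist (a q) (p : X) < 3 * infDist (p : X) F := by
    intro q p hfq
    have hp : (p : ↥Ω) ∈ V q := hfsub q (subset_tsupport _ (by simpa using hfq))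
    have h1 : dist (p : X) (q : X) < infDist (q : X) F / 2 := hp
    have h2 : infDist (q : X) F < 2 * infDist (p : X) F := by
      have := infDist_le_infDist_add_dist (x := (q : X)) (y := (p : X)) (s := F)
      rw [dist_comm] at this
      linarith
    calc dist (a q) (p : X) ≤ dist (a q) (q : X) + dist (q : X) (p : X) := dist_triangle _ _ _
      _ = infDist (q : X) F + dist (q : X) (p : X) := by rw [dist_comm, ← had]
      _ < infDist (q : X) F + infDist (q : X) F / 2 := by rw [dist_comm]; linarith
      _ < 3 * infDist (p : X) F := by linarith
  -- the sum on Ω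
  set S : C(↥F, E) → ↥Ω → E := fun c p => ∑ᶠ q, f q p • c (aF q) with hS
  have hsum1 : ∀ p : ↥Ω, ∑ᶠ q, f q p = 1 := fun p => f.sum_eq_one (mem_univ p)
  have hmemS : ∀ (c : C(↥F, E)) (p : ↥Ω) (T : Set E), Convex ℝ T →
      (∀ q : ↥Ω, f q p ≠ 0 → c (aF q) ∈ T) → S c p ∈ T := by
    intro c p T hT h
    exact hT.finsum_mem (fun q => f.nonneg q p) (hsum1 p) h
  -- definition of R
  set R : C(↥F, E) → X → E := fun c x =>
    if hx : x ∈ F then c ⟨x, hx⟩ else S c ⟨x, hx⟩ with hR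
  have hRF : ∀ c x (hx : x ∈ F), R c x = c ⟨x, hx⟩ := by
    intro c x hx; simp [hR, hx]
  have hRΩ : ∀ c (p : ↥Ω), R c (p : X) = S c p := by
    rintro c ⟨x, hx⟩
    simp only [hR]
    rw [dif_neg hx]
  -- convexity property
  have hconv : ∀ (c : C(↥F, E)) (T : Set E), Convex ℝ T → (∀ b, c b ∈ T) → ∀ x, R c x ∈ T := by
    intro c T hT hc x
    by_cases hx : x ∈ F
    · rw [hRF c x hx]; exact hc _
    · rw [hRΩ c ⟨x, hx⟩]; exact hmemS c _ T hT fun q _ => hc _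
  -- Lipschitz in c
  have hlip : ∀ (c c' : C(↥F, E)) (r : ℝ), 0 ≤ r → (∀ b, dist (c b) (c' b) ≤ r) →
      ∀ x, dist (R c x) (R c' x) ≤ r := by
    intro c c' r hr h x
    by_cases hx : x ∈ F
    · rw [hRF c x hx, hRF c' x hx]; exact h _
    · rw [hRΩ c ⟨x, hx⟩, hRΩ c' ⟨x, hx⟩]
      set p : ↥Ω := ⟨x, hx⟩
      have hfin : (support fun q : ↥Ω => f q p).Finite := f.locallyFinite.point_finite p
      have h1 : (support fun q : ↥Ω => f q p • c (aF q)).Finite :=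
        hfin.subset (support_smul_subset_left _ _)
      have h2 : (support fun q : ↥Ω => f q p • c' (aF q)).Finite :=
        hfin.subset (support_smul_subset_left _ _)
      have hdiff : S c p - S c' p = ∑ᶠ q, f q p • (c (aF q) - c' (aF q)) := by
        rw [hS]
        simp only [smul_sub]
        rw [finsum_sub_distrib h1 h2]
      have : S c p - S c' p ∈ Metric.closedBall (0 : E) r := by
        rw [hdiff]
        refine (convex_closedBall (0:E) r).finsum_mem (fun q => f.nonneg q p) (hsum1 p) ?_
        intro q hq
        rw [mem_closedBall, dist_zero_right, ← dist_eq_norm]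
        exact h _
      rw [dist_eq_norm]
      simpa [dist_zero_right, dist_eq_norm] using this
  -- continuity
  have hcont : ∀ c, Continuous (R c) := by
    intro c
    rw [continuous_iff_continuousAt]
    intro x
    by_cases hx : x ∈ F
    · -- boundary/interior of F
      rw [Metric.continuousAt_iff]
      intro ε hε
      have hcc : ContinuousAt c ⟨x, hx⟩ := c.continuous.continuousAt
      rw [Metric.continuousAt_iff] at hcc
      obtain ⟨δ, hδ, hcδ⟩ := hcc (ε / 2) (by linarith)
      refine ⟨δ / 4, by linarith, ?_⟩
      intro x' hx'
      have key : dist (R c x') (c ⟨x, hx⟩) ≤ ε / 2 := by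
        by_cases hx'F : x' ∈ F
        · rw [hRF c x' hx'F]
          refine le_of_lt (hcδ ?_)
          rw [Subtype.dist_eq]
          calc dist x' x < δ / 4 := hx'
            _ < δ := by linarith
        · rw [hRΩ c ⟨x', hx'F⟩]
          refine hmemS c _ (Metric.closedBall (c ⟨x, hx⟩) (ε/2))
            (convex_closedBall _ _) ?_
          intro q hq
          have h3 : dist (a q) (x' : X) < 3 * infDist x' F := hgeo q ⟨x', hx'F⟩ hq
          have h4 : infDist x' F ≤ dist x' x := infDist_le_dist_of_mem hx
          have h5 : dist ((a q : X)) x < δ := by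
            calc dist (a q : X) x ≤ dist (a q : X) x' + dist x' x := dist_triangle _ _ _
              _ < 3 * infDist x' F + dist x' x := by linarith
              _ ≤ 4 * dist x' x := by linarith
              _ < δ := by rw [dist_comm] at hx' ⊢; linarith [hx']
          refine mem_closedBall.2 (le_of_lt (hcδ ?_))
          rw [Subtype.dist_eq]
          exact h5
      rw [hRF c x hx]
      calc dist (R c x') (c ⟨x, hx⟩) ≤ ε / 2 := key
        _ < ε := by linarith
    · -- interior of Ω
      have hΩopen : IsOpen Ω := hFcl.isOpen_compl
      have hScont : Continuous (S c) := by
        rw [continuous_iff_continuousAt]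
        intro p
        obtain ⟨t, htn, htfin⟩ := f.locallyFinite p
        have : ∀ᶠ p' in 𝓝 p, S c p' = ∑ q ∈ htfin.toFinset, f q p' • c (aF q) := by
          filter_upwards [htn] with p' hp'
          refine finsum_eq_sum_of_support_subset _ ?_
          intro q hq
          have : f q p' ≠ 0 := by
            intro h0; apply hq; simp [h0]
          simp only [Finite.coe_toFinset, mem_setOf_eq]
          exact htfin.mem_toFinset.mp (htfin.mem_toFinset.mpr ⟨p', ⟨this, hp'⟩⟩)
        refine ContinuousAt.congr ?_ (this.mono fun p' h => h.symm)
        exact (continuous_finset_sum _ fun q _ => ((f q).continuous.smul continuous_const)).continuousAt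
      have hrestr : ContinuousOn (R c) Ω := by
        rw [continuousOn_iff_continuous_restrict]
        have : Ω.restrict (R c) = S c := by
          funext p
          exact hRΩ c p
        rw [show Ω.domRestrict (R c) = S c from this]
        exact hScont
      exact hrestr.continuousAt (hΩopen.mem_nhds hx)
  exact ⟨R, hcont, hRF, hconv, hlip⟩

end Dugundji

/-- (Lemma 2.2) If the maps on `𝕀^k × f⁻¹(y)` all of whose slices lie in
the class `𝒞 y` are uniformly dense (for every `k`, resp. for `k = m`), and
`ψ(y) = 𝒞(y)ᶜ` is closed, then for every `g` and every continuous `α : X → (0,∞)` the set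
`ψ(y) ∩ B̄(g,α)` is a `Z`-set (resp. a `Z_m`-set) in `B̄(g,α)` (uniform convergence
topology). -/
theorem statement4 {X Y E : Type*} [TopologicalSpace X] [TopologicalSpace.MetrizableSpace X]
    [TopologicalSpace Y] [TopologicalSpace.MetrizableSpace Y]
    [NormedAddCommGroup E] [NormedSpace ℝ E] [CompleteSpace E]
    (K : Set E) (hKcl : IsClosed K) (hKcv : Convex ℝ K)
    (f : X → Y) (hf : IsPerfectMap f) (hfsurj : Function.Surjective f)
    (𝒞 : Y → Set (X →ᵇ ↥K))
    (hdet : ∀ y : Y, ∀ g ∈ 𝒞 y, ∀ h : X →ᵇ ↥K,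
      (∀ x ∈ f ⁻¹' {y}, h x = g x) → h ∈ 𝒞 y)
    (y : Y) (hψ : IsClosed ((𝒞 y)ᶜ)) :
    ((∀ k : ℕ, Dense {u : C((Fin k → unitInterval) × ↥(f ⁻¹' {y}), ↥K) |
        ∀ z : Fin k → unitInterval, ∃ g' ∈ 𝒞 y, ∀ x : ↥(f ⁻¹' {y}), g' ↑x = u (z, x)}) →
      ∀ (α : X → ℝ), Continuous α → (∀ x, 0 < α x) → ∀ g : X →ᵇ ↥K,
        IsZSet (Subtype.val ⁻¹' (𝒞 y)ᶜ :
          Set ↥{h : X →ᵇ ↥K | ∀ x, dist (h x) (g x) ≤ α x})) ∧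
    (∀ m : ℕ, Dense {u : C((Fin m → unitInterval) × ↥(f ⁻¹' {y}), ↥K) |
        ∀ z : Fin m → unitInterval, ∃ g' ∈ 𝒞 y, ∀ x : ↥(f ⁻¹' {y}), g' ↑x = u (z, x)} →
      ∀ (α : X → ℝ), Continuous α → (∀ x, 0 < α x) → ∀ g : X →ᵇ ↥K,
        IsZmSet m (Subtype.val ⁻¹' (𝒞 y)ᶜ :
          Set ↥{h : X →ᵇ ↥K | ∀ x, dist (h x) (g x) ≤ α x})) := by
  obtain ⟨hfc, hfclosed, hfcomp⟩ := hf
  suffices key : ∀ m : ℕ, Dense {u : C((Fin m → unitInterval) × ↥(f ⁻¹' {y}), ↥K) |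
        ∀ z : Fin m → unitInterval, ∃ g' ∈ 𝒞 y, ∀ x : ↥(f ⁻¹' {y}), g' ↑x = u (z, x)} →
      ∀ (α : X → ℝ), Continuous α → (∀ x, 0 < α x) → ∀ g : X →ᵇ ↥K,
        IsZmSet m (Subtype.val ⁻¹' (𝒞 y)ᶜ :
          Set ↥{h : X →ᵇ ↥K | ∀ x, dist (h x) (g x) ≤ α x}) by
    exact ⟨fun hd α hc hp g m => key m (hd m) α hc hp g, key⟩
  intro m hdense α hαc hαp g
  letI : MetricSpace X := TopologicalSpace.metrizableSpaceMetric X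
  have hFcl : IsClosed (f ⁻¹' {y}) := isClosed_singleton.preimage hfc
  have hFcp : IsCompact (f ⁻¹' {y}) := hfcomp y
  have hFne : (f ⁻¹' {y}).Nonempty := hfsurj y
  haveI : CompactSpace ↥(f ⁻¹' {y}) := isCompact_iff_compactSpace.mp hFcp
  haveI : Nonempty ↥(f ⁻¹' {y}) := hFne.to_subtype
  constructor
  · exact hψ.preimage continuous_subtype_val
  · rw [Metric.dense_iff]
    intro u ε hε
    obtain ⟨x₀, hx₀F, hx₀min⟩ := hFcp.exists_isMinOn hFne hαc.continuousOn
    obtain ⟨x₁, hx₁F, hx₁max⟩ := hFcp.exists_isMaxOn hFne hαc.continuousOn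
    set a₀ := α x₀ with ha₀def
    set b₀ := α x₁ with hb₀def
    have ha₀ : 0 < a₀ := hαp x₀
    have hb₀ : 0 < b₀ := hαp x₁
    have hab : a₀ ≤ b₀ := hx₁max hx₀F
    set t : ℝ := min 1 (ε / (8 * b₀)) with htdef
    have ht0 : 0 < t := lt_min one_pos (div_pos hε (by positivity))
    have ht1 : t ≤ 1 := min_le_left _ _
    have htb : t * b₀ ≤ ε / 8 := by
      have h1 : t ≤ ε / (8 * b₀) := min_le_right _ _
      have h2 : t * b₀ ≤ ε / (8 * b₀) * b₀ := by nlinarith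
      have h3 : ε / (8 * b₀) * b₀ = ε / 8 := by field_simp
      linarith
    set δ' : ℝ := t * a₀ / 8 with hδ'def
    have hδ'0 : 0 < δ' := by positivity
    -- segment helpers
    have seg1 : ∀ (a b : E) (s : ℝ), 0 ≤ s → dist ((1-s)•a + s•b) a = s * dist b a := by
      intro a b s hs
      have h1 : (1-s)•a + s•b - a = s • (b - a) := by module
      rw [dist_eq_norm, h1, norm_smul, Real.norm_eq_abs, abs_of_nonneg hs, dist_eq_norm]
    have seg2 : ∀ (a b : E) (s : ℝ), s ≤ 1 → dist ((1-s)•a + s•b) b = (1-s) * dist a b := by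
      intro a b s hs
      have h1 : (1-s)•a + s•b - b = (1-s) • (a - b) := by module
      rw [dist_eq_norm, h1, norm_smul, Real.norm_eq_abs,
        abs_of_nonneg (by linarith : (0:ℝ) ≤ 1 - s), dist_eq_norm]
    have seg3 : ∀ (a a' b b' : E) (s : ℝ), 0 ≤ s → s ≤ 1 →
        dist ((1-s)•a + s•b) ((1-s)•a' + s•b') ≤ (1-s) * dist a a' + s * dist b b' := by
      intro a a' b b' s hs0 hs1
      have h1 : ((1-s)•a + s•b) - ((1-s)•a' + s•b') = (1-s)•(a - a') + s•(b - b') := by module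
      rw [dist_eq_norm, h1]
      calc ‖(1-s)•(a - a') + s•(b - b')‖ ≤ ‖(1-s)•(a-a')‖ + ‖s•(b-b')‖ := norm_add_le _ _
        _ = (1-s) * ‖a - a'‖ + s * ‖b - b'‖ := by
            rw [norm_smul, norm_smul, Real.norm_eq_abs, Real.norm_eq_abs,
              abs_of_nonneg (by linarith : (0:ℝ) ≤ 1 - s), abs_of_nonneg hs0]
        _ = (1-s) * dist a a' + s * dist b b' := by rw [dist_eq_norm, dist_eq_norm]
    -- neighborhoods
    set N₀ : Set X := {x | a₀ / 2 < α x ∧ α x < 2 * b₀} with hN₀def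
    have hN₀o : IsOpen N₀ :=
      (isOpen_lt continuous_const hαc).inter (isOpen_lt hαc continuous_const)
    have hFN₀ : f ⁻¹' {y} ⊆ N₀ := fun x hx =>
      ⟨lt_of_lt_of_le (half_lt_self ha₀) (hx₀min hx),
       lt_of_le_of_lt (hx₁max hx) (by linarith)⟩
    obtain ⟨N₁, hN₁o, hFN₁, hN₁N₀⟩ := normal_exists_closure_subset hFcl hN₀o hFN₀
    obtain ⟨lam₀, hlam₀0, hlam₀1, hlam₀mem⟩ :=
      exists_continuous_zero_one_of_isClosed hN₀o.isClosed_compl isClosed_closure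
        (Set.disjoint_left.mpr fun x hx hxc => hx (hN₁N₀ hxc))
    replace hlam₀mem : ∀ x, 0 ≤ lam₀ x ∧ lam₀ x ≤ 1 := fun x => ⟨(hlam₀mem x).1, (hlam₀mem x).2⟩
    have hlam₀N₀ : ∀ x, lam₀ x ≠ 0 → x ∈ N₀ := by
      intro x hx; by_contra h; exact hx (by simpa using hlam₀0 h)
    -- the pulled map
    set uval : (Fin m → unitInterval) → X → E := fun z x => ((u z : X →ᵇ ↥K) x : E) with huval
    set pkE : (Fin m → unitInterval) × X → E :=
      fun p => (1 - t * lam₀ p.2) • uval p.1 p.2 + (t * lam₀ p.2) • ((g p.2 : E)) with hpkEdef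
    have hs01 : ∀ x : X, 0 ≤ t * lam₀ x ∧ t * lam₀ x ≤ 1 := fun x =>
      ⟨mul_nonneg ht0.le (hlam₀mem x).1,
       by nlinarith [(hlam₀mem x).1, (hlam₀mem x).2]⟩
    have hpkEK : ∀ p, pkE p ∈ K := fun p =>
      hKcv ((u p.1 : X →ᵇ ↥K) p.2).2 (g p.2).2 (by linarith [(hs01 p.2).2]) (hs01 p.2).1 (by ring)
    have hu_joint : Continuous fun p : (Fin m → unitInterval) × X => uval p.1 p.2 := by
      apply continuous_subtype_val.comp
      exact ContinuousEval.continuous_eval.comp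
        (((continuous_subtype_val.comp u.continuous).comp continuous_fst).prodMk continuous_snd)
    have hpkEcont : Continuous pkE := by
      apply Continuous.add
      · exact (continuous_const.sub
          (continuous_const.mul (lam₀.continuous.comp continuous_snd))).smul hu_joint
      · exact (continuous_const.mul (lam₀.continuous.comp continuous_snd)).smul
          (continuous_subtype_val.comp (g.continuous.comp continuous_snd))
    have hdistMα : ∀ z x, dist (uval z x) ((g x : E)) ≤ α x := by
      intro z x
      have h := (u z).2 x
      rwa [Subtype.dist_eq] at h
    have hpk_dist_u : ∀ p : (Fin m → unitInterval) × X,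
        dist (pkE p) (uval p.1 p.2) ≤ 2 * t * b₀ := by
      intro p
      have h := seg1 (uval p.1 p.2) ((g p.2 : E)) (t * lam₀ p.2) (hs01 p.2).1
      by_cases h0 : lam₀ p.2 = 0
      · have : dist (pkE p) (uval p.1 p.2) = 0 := by rw [h, h0]; ring
        rw [this]; positivity
      · have hN := hlam₀N₀ _ h0
        have hd : dist ((g p.2 : E)) (uval p.1 p.2) ≤ α p.2 := by
          rw [dist_comm]; exact hdistMα p.1 p.2
        have hα2 : α p.2 < 2 * b₀ := hN.2
        rw [h]
        have hd2 : dist ((g p.2 : E)) (uval p.1 p.2) ≤ 2 * b₀ := by linarith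
        calc t * lam₀ p.2 * dist ((g p.2 : E)) (uval p.1 p.2)
            ≤ (t * 1) * (2 * b₀) := by
              refine mul_le_mul ?_ hd2 dist_nonneg (by positivity)
              exact mul_le_mul_of_nonneg_left (hlam₀mem p.2).2 ht0.le
          _ = 2 * t * b₀ := by ring
    have hpk_dist_g : ∀ p : (Fin m → unitInterval) × X,
        dist (pkE p) ((g p.2 : E)) = (1 - t * lam₀ p.2) * dist (uval p.1 p.2) ((g p.2 : E)) :=
      fun p => seg2 _ _ _ (hs01 p.2).2
    have hpk_lip : ∀ (z z' : Fin m → unitInterval) (x : X),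
        dist (pkE (z, x)) (pkE (z', x)) ≤ dist (uval z x) (uval z' x) := by
      intro z z' x
      have h := seg3 (uval z x) (uval z' x) ((g x : E)) ((g x : E)) (t * lam₀ x)
        (hs01 x).1 (hs01 x).2
      have h2 : (1 - t * lam₀ x) * dist (uval z x) (uval z' x)
          + (t * lam₀ x) * dist ((g x : E)) ((g x : E)) ≤ dist (uval z x) (uval z' x) := by
        rw [dist_self, mul_zero, add_zero]
        nlinarith [dist_nonneg (x := uval z x) (y := uval z' x), (hs01 x).1, (hs01 x).2]
      exact le_trans h h2
    -- apply density on the fiber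
    set u₁ : C((Fin m → unitInterval) × ↥(f ⁻¹' {y}), ↥K) :=
      ⟨fun p => ⟨pkE (p.1, ↑p.2), hpkEK _⟩, by
        apply Continuous.subtype_mk
        exact hpkEcont.comp (continuous_fst.prodMk (continuous_subtype_val.comp continuous_snd))⟩
      with hu₁def
    obtain ⟨w, hwb, hwS⟩ := Metric.dense_iff.mp hdense u₁ δ' hδ'0
    have hw_pt : ∀ (z) (b : ↥(f ⁻¹' {y})), dist (w (z, b)) (u₁ (z, b)) < δ' :=
      fun z b => lt_of_le_of_lt (ContinuousMap.dist_apply_le_dist _) (mem_ball.mp hwb)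
    -- Dugundji extension
    obtain ⟨R, hRcont, hRFeq, hRconv, hRlip⟩ := dugundji_extension (E := E) hFcp hFne
    set ω : (Fin m → unitInterval) → C(↥(f ⁻¹' {y}), E) := fun z =>
      ⟨fun b => (w (z, b) : E),
        continuous_subtype_val.comp (w.continuous.comp (Continuous.prodMk_right z))⟩ with hωdef
    set wc := w.curry with hwcdef
    set Wm : (Fin m → unitInterval) → X → E := fun z => R (ω z) with hWmdef
    have hWF : ∀ z x (hx : x ∈ f ⁻¹' {y}), Wm z x = (w (z, ⟨x, hx⟩) : E) :=
      fun z x hx => hRFeq (ω z) x hx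
    have hWK : ∀ z x, Wm z x ∈ K := fun z x => hRconv (ω z) K hKcv (fun b => (w (z, b)).2) x
    have hWlip : ∀ z z' x, dist (Wm z x) (Wm z' x) ≤ dist (wc z) (wc z') := by
      intro z z' x
      refine hRlip (ω z) (ω z') _ dist_nonneg (fun b => ?_) x
      have e1 : ω z b = ((wc z b : ↥K) : E) := by rw [hwcdef, ContinuousMap.curry_apply]; rfl
      have e2 : ω z' b = ((wc z' b : ↥K) : E) := by rw [hwcdef, ContinuousMap.curry_apply]; rfl
      rw [e1, e2, ← Subtype.dist_eq]
      exact ContinuousMap.dist_apply_le_dist b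
    have hWjoint : Continuous fun p : (Fin m → unitInterval) × X => Wm p.1 p.2 := by
      rw [Metric.continuous_iff]
      rintro ⟨z, x⟩ ε' hε'
      obtain ⟨δ₁, hδ₁0, hδ₁⟩ := Metric.continuousAt_iff.mp
        (wc.continuous.continuousAt (x := z)) (ε'/2) (by linarith)
      obtain ⟨δ₂, hδ₂0, hδ₂⟩ := Metric.continuousAt_iff.mp
        ((hRcont (ω z)).continuousAt (x := x)) (ε'/2) (by linarith)
      refine ⟨min δ₁ δ₂, lt_min hδ₁0 hδ₂0, ?_⟩
      rintro ⟨z', x'⟩ hp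
      rw [Prod.dist_eq] at hp
      have h1 : dist z' z < δ₁ := (le_max_left _ _).trans_lt (hp.trans_le (min_le_left _ _))
      have h2 : dist x' x < δ₂ := (le_max_right _ _).trans_lt (hp.trans_le (min_le_right _ _))
      calc dist (Wm z' x') (Wm z x)
          ≤ dist (Wm z' x') (Wm z x') + dist (Wm z x') (Wm z x) := dist_triangle _ _ _
        _ < ε'/2 + ε'/2 := add_lt_add_of_le_of_lt
            (le_trans (hWlip z' z x') (le_of_lt (hδ₁ h1))) (hδ₂ h2)
        _ = ε' := by ring
    -- the good neighborhood
    set Cbad : Set ((Fin m → unitInterval) × X) :=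
      {p | 2 * δ' ≤ dist (Wm p.1 p.2) (pkE p)} with hCbaddef
    have hCbadcl : IsClosed Cbad := isClosed_le continuous_const (hWjoint.dist hpkEcont)
    have hsnd : IsClosed (Prod.snd '' Cbad) := isClosedMap_snd_of_compactSpace _ hCbadcl
    set N' : Set X := (Prod.snd '' Cbad)ᶜ with hN'def
    have hFN' : f ⁻¹' {y} ⊆ N' := by
      intro x hx
      rintro ⟨⟨z, x'⟩, hmem, rfl⟩
      have hD : dist (Wm z x') (pkE (z, x')) < 2 * δ' := by
        rw [hWF z x' hx]
        have h := hw_pt z ⟨x', hx⟩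
        rw [Subtype.dist_eq] at h
        calc dist ((w (z, ⟨x', hx⟩) : E)) (pkE (z, x')) < δ' := h
          _ < 2 * δ' := by linarith
      exact (not_le.mpr hD) hmem
    obtain ⟨lam, hlam0, hlam1, hlammem⟩ := exists_continuous_zero_one_of_isClosed
      (hsnd.isOpen_compl.inter hN₁o).isClosed_compl hFcl
      (Set.disjoint_left.mpr fun x hx hxF => hx ⟨hFN' hxF, hFN₁ hxF⟩)
    replace hlammem : ∀ x, 0 ≤ lam x ∧ lam x ≤ 1 := fun x => ⟨(hlammem x).1, (hlammem x).2⟩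
    have hlamO : ∀ x, lam x ≠ 0 → x ∈ N' ∩ N₁ := by
      intro x hx; by_contra h; exact hx (by simpa using hlam0 h)
    -- the approximating map
    set vE : (Fin m → unitInterval) → X → E :=
      fun z x => (1 - lam x) • pkE (z, x) + lam x • Wm z x with hvEdef
    have hvK : ∀ z x, vE z x ∈ K := fun z x =>
      hKcv (hpkEK (z, x)) (hWK z x) (by linarith [(hlammem x).2]) (hlammem x).1 (by ring)
    have hv_pk : ∀ z x, dist (vE z x) (pkE (z, x)) ≤ 2 * δ' := by
      intro z x
      have h := seg1 (pkE (z, x)) (Wm z x) (lam x) (hlammem x).1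
      by_cases h0 : lam x = 0
      · have hz : dist (vE z x) (pkE (z, x)) = 0 := by rw [h, h0]; ring
        rw [hz]; positivity
      · have hN := hlamO x h0
        have hDlt : dist (Wm z x) (pkE (z, x)) < 2 * δ' := by
          by_contra hc
          exact hN.1 ⟨(z, x), not_lt.mp hc, rfl⟩
        rw [h]
        calc lam x * dist (Wm z x) (pkE (z, x)) ≤ 1 * (2 * δ') :=
              mul_le_mul (hlammem x).2 hDlt.le dist_nonneg zero_le_one
          _ = 2 * δ' := one_mul _
    have hv_u : ∀ z x, dist (vE z x) (uval z x) ≤ 2 * δ' + 2 * t * b₀ := fun z x =>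
      le_trans (dist_triangle _ (pkE (z, x)) _) (add_le_add (hv_pk z x) (hpk_dist_u (z, x)))
    have hv_g : ∀ z x, dist (vE z x) ((g x : E)) ≤ α x := by
      intro z x
      by_cases h0 : lam x = 0
      · have he : vE z x = pkE (z, x) := by
          simp only [hvEdef, h0]; simp
        rw [he]
        calc dist (pkE (z, x)) ((g x : E))
            = (1 - t * lam₀ x) * dist (uval z x) ((g x : E)) := hpk_dist_g (z, x)
          _ ≤ 1 * α x :=
              mul_le_mul (by linarith [(hs01 x).1]) (hdistMα z x) dist_nonneg zero_le_one
          _ = α x := one_mul _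
      · have hN := hlamO x h0
        have hN₁x : x ∈ N₁ := hN.2
        have hlam₀x : lam₀ x = 1 := by simpa using hlam₀1 (subset_closure hN₁x)
        have hαx : a₀ / 2 < α x := (hN₁N₀ (subset_closure hN₁x)).1
        have hDlt : dist (Wm z x) (pkE (z, x)) < 2 * δ' := by
          by_contra hc
          exact hN.1 ⟨(z, x), not_lt.mp hc, rfl⟩
        have h1 : dist (vE z x) (pkE (z, x)) ≤ 2 * δ' := hv_pk z x
        have h2 : dist (pkE (z, x)) ((g x : E)) = (1 - t) * dist (uval z x) ((g x : E)) := by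
          have := hpk_dist_g (z, x)
          rwa [hlam₀x, mul_one] at this
        have h3 : dist (vE z x) ((g x : E)) ≤ 2 * δ' + (1 - t) * α x := by
          calc dist (vE z x) ((g x : E))
              ≤ dist (vE z x) (pkE (z, x)) + dist (pkE (z, x)) ((g x : E)) := dist_triangle _ _ _
            _ ≤ 2 * δ' + (1 - t) * α x := by
                rw [h2]
                have h1t : (0:ℝ) ≤ 1 - t := by linarith
                exact add_le_add h1 (mul_le_mul_of_nonneg_left (hdistMα z x) h1t)
        have h4 : 2 * δ' ≤ t * α x / 2 := by
          have hm := mul_le_mul_of_nonneg_left hαx.le ht0.le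
          linarith only [hδ'def.le, hδ'def.ge, hm]
        linarith only [h3, h4, mul_pos ht0 (hαp x)]
    -- bundling v as bounded continuous functions
    have hbound : ∀ z, ∃ C, ∀ x x', dist (vE z x) (vE z x') ≤ C := by
      intro z
      obtain ⟨C, hC⟩ := (u z : X →ᵇ ↥K).bounded
      refine ⟨(2*δ' + 2*t*b₀) + C + (2*δ' + 2*t*b₀), fun x x' => ?_⟩
      have h1 := hv_u z x
      have h2 := hv_u z x'
      have h3 : dist (uval z x) (uval z x') ≤ C := by
        have := hC x x'
        rwa [Subtype.dist_eq] at this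
      calc dist (vE z x) (vE z x')
          ≤ dist (vE z x) (uval z x) + dist (uval z x) (uval z x')
            + dist (uval z x') (vE z x') := dist_triangle4 _ _ _ _
        _ ≤ (2*δ' + 2*t*b₀) + C + (2*δ' + 2*t*b₀) := by
            rw [dist_comm (uval z x') (vE z x')]
            exact add_le_add (add_le_add h1 h3) h2
    set vB : (Fin m → unitInterval) → (X →ᵇ ↥K) := fun z =>
      ⟨⟨fun x => ⟨vE z x, hvK z x⟩, by
          apply Continuous.subtype_mk
          exact ((continuous_const.sub lam.continuous).smul
            (hpkEcont.comp (Continuous.prodMk_right z))).add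
            (lam.continuous.smul (hRcont (ω z)))⟩, by
        obtain ⟨C, hC⟩ := hbound z
        refine ⟨C, fun x x' => ?_⟩
        rw [Subtype.dist_eq]
        exact hC x x'⟩ with hvBdef
    have hvBM : ∀ z x, dist (vB z x) (g x) ≤ α x := by
      intro z x
      rw [Subtype.dist_eq]
      exact hv_g z x
    have hvB𝒞 : ∀ z, vB z ∈ 𝒞 y := by
      intro z
      obtain ⟨g', hg'𝒞, hg'⟩ := hwS z
      refine hdet y g' hg'𝒞 (vB z) fun x hx => ?_
      have hlamx : lam x = 1 := by simpa using hlam1 hx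
      apply Subtype.ext
      calc ((vB z x : E)) = (1 - lam x) • pkE (z, x) + lam x • Wm z x := rfl
        _ = Wm z x := by rw [hlamx]; simp
        _ = (w (z, ⟨x, hx⟩) : E) := hWF z x hx
        _ = ((g' x : E)) := congrArg Subtype.val (hg' ⟨x, hx⟩).symm
    have hvBlip : ∀ z z', dist (vB z) (vB z') ≤ dist (u z) (u z') + dist (wc z) (wc z') := by
      intro z z'
      refine (BoundedContinuousFunction.dist_le
        (add_nonneg dist_nonneg dist_nonneg)).mpr fun x => ?_
      rw [Subtype.dist_eq]
      have h := seg3 (pkE (z, x)) (pkE (z', x)) (Wm z x) (Wm z' x) (lam x)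
        (hlammem x).1 (hlammem x).2
      have h1 : dist (pkE (z, x)) (pkE (z', x)) ≤ dist (u z) (u z') := by
        refine le_trans (hpk_lip z z' x) ?_
        calc dist (uval z x) (uval z' x)
            = dist ((u z : X →ᵇ ↥K) x) ((u z' : X →ᵇ ↥K) x) := (Subtype.dist_eq _ _).symm
          _ ≤ dist ((u z : X →ᵇ ↥K)) ((u z' : X →ᵇ ↥K)) :=
              BoundedContinuousFunction.dist_coe_le_dist x
          _ = dist (u z) (u z') := (Subtype.dist_eq _ _).symm
      have h2 : dist (Wm z x) (Wm z' x) ≤ dist (wc z) (wc z') := hWlip z z' x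
      refine le_trans h ?_
      have hl0 := (hlammem x).1
      have hl1 := (hlammem x).2
      calc (1 - lam x) * dist (pkE (z, x)) (pkE (z', x)) + lam x * dist (Wm z x) (Wm z' x)
          ≤ (1 - lam x) * dist (u z) (u z') + lam x * dist (wc z) (wc z') :=
            add_le_add (mul_le_mul_of_nonneg_left h1 (sub_nonneg.mpr hl1))
              (mul_le_mul_of_nonneg_left h2 hl0)
        _ ≤ dist (u z) (u z') + dist (wc z) (wc z') :=
            add_le_add (mul_le_of_le_one_left dist_nonneg (by linarith only [hl0]))
              (mul_le_of_le_one_left dist_nonneg hl1)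
    have hvBcont : Continuous vB := by
      rw [Metric.continuous_iff]
      intro z ε' hε'
      obtain ⟨δ₁, hδ₁0, hδ₁⟩ := Metric.continuousAt_iff.mp
        (u.continuous.continuousAt (x := z)) (ε'/3) (by linarith)
      obtain ⟨δ₂, hδ₂0, hδ₂⟩ := Metric.continuousAt_iff.mp
        (wc.continuous.continuousAt (x := z)) (ε'/3) (by linarith)
      refine ⟨min δ₁ δ₂, lt_min hδ₁0 hδ₂0, fun z' hz' => ?_⟩
      have h1 := hδ₁ (lt_of_lt_of_le hz' (min_le_left _ _))
      have h2 := hδ₂ (lt_of_lt_of_le hz' (min_le_right _ _))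
      calc dist (vB z') (vB z) ≤ dist (u z') (u z) + dist (wc z') (wc z) := hvBlip z' z
        _ < ε'/3 + ε'/3 := add_lt_add h1 h2
        _ < ε' := by linarith
    refine ⟨⟨fun z => ⟨vB z, hvBM z⟩, hvBcont.subtype_mk _⟩, mem_ball.mpr ?_, ?_⟩
    · rw [ContinuousMap.dist_lt_iff hε]
      intro z
      rw [Subtype.dist_eq]
      have hb : dist (vB z) ((u z : X →ᵇ ↥K)) ≤ 2*δ' + 2*t*b₀ := by
        refine (BoundedContinuousFunction.dist_le (by positivity)).mpr fun x => ?_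
        rw [Subtype.dist_eq]
        exact hv_u z x
      have hlt : 2*δ' + 2*t*b₀ < ε := by
        rw [hδ'def]
        linarith [htb, hε, mul_le_mul_of_nonneg_left hab ht0.le]
      exact lt_of_le_of_lt hb hlt
    · exact fun z hz => hz (hvB𝒞 z)
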